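/- Suppose p is a monic polynomial of degree n ≥ 1 with distinct real roots t_1, ..., t_n, and let r(t) = t(t−1)(t−b)·p''(t) + (2(t−1)(t−b) + 2t(t−b) + t(t−1))·p'(t), where b is a real number distinct from every t_m. If every root t_m of p satisfies the equilibrium equation ∑_{i≠m} 2/(t_m − t_i) = −2/t_m − 2/(t_m − 1) − 1/(t_m − b) (with all t_m distinct from 0, 1, b), then p divides r in ℝ[t]. -/

import Mathlib

open Polynomial Finset

theorem deriv_fprod {ι : Type*} [DecidableEq ι] (s : Finset ι) (f : ι → Polynomial ℝ) :
    derivative (∏ i ∈ s, f i) = ∑ i ∈ s, (∏ j ∈ s.erase i, f j) * derivative (f i) := by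
  rw [Finset.prod_eq_multiset_prod, Polynomial.derivative_prod]
  rw [Finset.sum_eq_multiset_sum]
  congr 1

theorem equilibrium_implies_dvd (n : ℕ) (hn : 1 ≤ n) (t : Fin n → ℝ)
    (ht : Function.Injective t) (b : ℝ) (hb : ∀ m, t m ≠ b)
    (h0 : ∀ m, t m ≠ 0) (h1 : ∀ m, t m ≠ 1)
    (p : Polynomial ℝ) (hp : p = ∏ i : Fin n, (X - C (t i)))
    (r : Polynomial ℝ)
    (hr : r = X * (X - 1) * (X - C b) * Polynomial.derivative (Polynomial.derivative p) +
        (2 * (X - 1) * (X - C b) + 2 * X * (X - C b) + X * (X - 1)) *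
          Polynomial.derivative p)
    (heq : ∀ m : Fin n,
      ∑ i ∈ Finset.univ.erase m, 2 / (t m - t i) =
        -2 / t m - 2 / (t m - 1) - 1 / (t m - b)) :
    p ∣ r := by
  classical
  rw [hp]
  apply Finset.prod_dvd_of_coprime
  · intro i _ j _ hij
    exact isCoprime_X_sub_C_of_isUnit_sub
      (sub_ne_zero.2 fun h => hij (ht h)).isUnit
  intro m _
  rw [Polynomial.dvd_iff_isRoot, Polynomial.IsRoot, hr]
  set u := t m with hu
  have hne : ∀ i, i ≠ m → u - t i ≠ 0 := fun i hi =>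
    sub_ne_zero.2 fun h => hi (ht h.symm)
  have hd : derivative p = ∑ i : Fin n, ∏ j ∈ univ.erase i, (X - C (t j)) := by
    rw [hp, deriv_fprod]; simp
  set D : ℝ := ∏ j ∈ univ.erase m, (u - t j) with hD
  have hD1 : eval u (derivative p) = D := by
    rw [hd, eval_finset_sum, Finset.sum_eq_single m]
    · simp [eval_prod, hD]
    · intro i _ him
      rw [eval_prod]
      apply Finset.prod_eq_zero (Finset.mem_erase.2 ⟨Ne.symm him, Finset.mem_univ m⟩)
      simp [hu]
    · simp
  have hD2 : eval u (derivative (derivative p)) =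
      2 * ∑ c ∈ univ.erase m, ∏ j ∈ (univ.erase m).erase c, (u - t j) := by
    rw [hd, map_sum]
    rw [eval_finset_sum]
    have hterm : ∀ i : Fin n,
        eval u (derivative (∏ j ∈ univ.erase i, (X - C (t j)))) =
          ∑ c ∈ (univ.erase i), ∏ j ∈ (univ.erase i).erase c, (u - t j) := by
      intro i
      rw [deriv_fprod, eval_finset_sum]
      apply Finset.sum_congr rfl
      intro c _
      simp [eval_prod]
    simp only [hterm]
    rw [← Finset.add_sum_erase _ _ (Finset.mem_univ m)]
    have hrest : ∀ i ∈ univ.erase m,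
        (∑ c ∈ univ.erase i, ∏ j ∈ (univ.erase i).erase c, (u - t j)) =
          ∏ j ∈ (univ.erase m).erase i, (u - t j) := by
      intro i hi
      have him : i ≠ m := (Finset.mem_erase.1 hi).1
      rw [Finset.sum_eq_single m]
      · rw [Finset.erase_right_comm]
      · intro c hc hcm
        have hci : c ≠ i := (Finset.mem_erase.1 hc).1
        apply Finset.prod_eq_zero
          (Finset.mem_erase.2 ⟨hcm.symm, Finset.mem_erase.2 ⟨him.symm, Finset.mem_univ m⟩⟩)
        simp [hu]
      · intro h; exact absurd (Finset.mem_erase.2 ⟨him.symm, Finset.mem_univ m⟩) h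
    rw [Finset.sum_congr rfl hrest]
    ring
  have hS : (2:ℝ) * ∑ c ∈ univ.erase m, ∏ j ∈ (univ.erase m).erase c, (u - t j) =
      (∑ c ∈ univ.erase m, 2 / (u - t c)) * D := by
    rw [Finset.mul_sum, Finset.sum_mul]
    apply Finset.sum_congr rfl
    intro c hc
    have hc' : u - t c ≠ 0 := hne c (Finset.mem_erase.1 hc).1
    rw [div_mul_eq_mul_div, eq_div_iff hc', hD]
    rw [mul_assoc, Finset.prod_erase_mul _ _ hc]
  have key : u * (u - 1) * (u - b) * eval u (derivative (derivative p)) +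
      (2 * (u - 1) * (u - b) + 2 * u * (u - b) + u * (u - 1)) * eval u (derivative p) = 0 := by
    rw [hD2, hS, hD1, heq m]
    have e0 : u ≠ 0 := h0 m
    have e1 : u - 1 ≠ 0 := sub_ne_zero.2 (h1 m)
    have eb : u - b ≠ 0 := sub_ne_zero.2 (hb m)
    simp only [← hu]
    field_simp
    ring
  simpa using key
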